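/- For all τ ∈ (2,3), all b_r, b_b ∈ [0,1), and all integers ℓ: (τ-2)^(b_r+ℓ) + (τ-2)^(b_b-ℓ-1) ≥ τ - 1, i.e. the value (τ-2)^(b_r+ℓ) + (τ-2)^(b_b-ℓ-1) divided by (τ-1) is at least 1. -/

import Mathlib

open Real

lemma key_aux (x u v t : ℝ) (hx0 : 0 < x) (hx1 : x < 1)
    (hu : x ≤ u) (hu1 : u ≤ 1) (hv : 1 ≤ v) (ht : 0 ≤ t) :
    u * x ^ t + v * x ^ (-t) ≥ x + 1 := by
  have hp0 : (0:ℝ) < x ^ t := Real.rpow_pos_of_pos hx0 t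
  have hp1 : x ^ t ≤ 1 := Real.rpow_le_one hx0.le hx1.le ht
  have hneg : x ^ (-t) = (x ^ t)⁻¹ := Real.rpow_neg hx0.le t
  rw [hneg]
  rw [ge_iff_le, ← sub_nonneg]
  have h1 : v * (x ^ t)⁻¹ * x ^ t = v := by field_simp
  nlinarith [mul_nonneg (sub_nonneg.2 hp1) (sub_nonneg.2 (le_trans hu1 hv)),
    mul_pos hp0 hp0, mul_le_one₀ hu1 hp0.le hp1]

theorem stmt_2 (τ b_r b_b : ℝ) (hτ1 : 2 < τ) (hτ2 : τ < 3)
    (hbr0 : 0 ≤ b_r) (hbr1 : b_r < 1) (hbb0 : 0 ≤ b_b) (hbb1 : b_b < 1)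
    (ℓ : ℤ) :
    (τ - 2) ^ (b_r + (ℓ : ℝ)) + (τ - 2) ^ (b_b - (ℓ : ℝ) - 1) ≥ τ - 1 := by
  set x := τ - 2 with hx
  have hx0 : 0 < x := by linarith
  have hx1 : x < 1 := by linarith
  have hxbr : x ≤ x ^ b_r := by
    calc x = x ^ (1:ℝ) := (Real.rpow_one x).symm
    _ ≤ x ^ b_r := Real.rpow_le_rpow_of_exponent_ge hx0 hx1.le hbr1.le
  have hbr_le1 : x ^ b_r ≤ 1 := Real.rpow_le_one hx0.le hx1.le hbr0
  have hxbb : x ≤ x ^ b_b := by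
    calc x = x ^ (1:ℝ) := (Real.rpow_one x).symm
    _ ≤ x ^ b_b := Real.rpow_le_rpow_of_exponent_ge hx0 hx1.le hbb1.le
  have hbb_le1 : x ^ b_b ≤ 1 := Real.rpow_le_one hx0.le hx1.le hbb0
  have hbbm1 : 1 ≤ x ^ (b_b - 1) :=
    Real.one_le_rpow_of_pos_of_le_one_of_nonpos hx0 hx1.le (by linarith)
  have hbrm1 : 1 ≤ x ^ (b_r - 1) :=
    Real.one_le_rpow_of_pos_of_le_one_of_nonpos hx0 hx1.le (by linarith)
  rcases le_or_gt 0 (ℓ : ℝ) with hl | hl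
  · have e1 : x ^ (b_r + (ℓ : ℝ)) = x ^ b_r * x ^ (ℓ : ℝ) :=
      Real.rpow_add hx0 _ _
    have e2 : x ^ (b_b - (ℓ : ℝ) - 1) = x ^ (b_b - 1) * x ^ (-(ℓ : ℝ)) := by
      rw [← Real.rpow_add hx0]; ring_nf
    have := key_aux x (x ^ b_r) (x ^ (b_b - 1)) (ℓ : ℝ) hx0 hx1 hxbr hbr_le1 hbbm1 hl
    rw [e1, e2]; linarith
  · set t : ℝ := -(ℓ : ℝ) - 1 with htdef
    have ht : 0 ≤ t := by
      have hl' : ℓ + 1 ≤ 0 := by exact_mod_cast hl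
      have : (ℓ : ℝ) ≤ -1 := by
        have : (ℓ:ℝ) + 1 ≤ 0 := by exact_mod_cast hl'
        linarith
      simp only [htdef]; linarith
    have e1 : x ^ (b_r + (ℓ : ℝ)) = x ^ (b_r - 1) * x ^ (-t) := by
      rw [← Real.rpow_add hx0, htdef]; ring_nf
    have e2 : x ^ (b_b - (ℓ : ℝ) - 1) = x ^ b_b * x ^ t := by
      rw [← Real.rpow_add hx0, htdef]; ring_nf
    have := key_aux x (x ^ b_b) (x ^ (b_r - 1)) t hx0 hx1 hxbb hbb_le1 hbrm1 ht
    rw [e1, e2]; linarith
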